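/- Let U be a non-empty bounded subset of (ℝ₊*)^n whose closure is contained in (ℝ₊*)^n, let v ∈ ℤ^n be non-zero, and define the tentacle S = {λ_v(s)ξ : ξ ∈ U, 0 < s ≤ 1} where λ_v(s)ξ = (s^{v_1}ξ_1, ..., s^{v_n}ξ_n). Then for u ∈ ℤ^n, the set S(u) = {ξ ∈ (ℝ*)^n : λ_u(s)ξ ∈ S for all sufficiently small s > 0} is non-empty if and only if u ∈ ℤ₊·v (i.e. u is a non-negative integer multiple of v). -/

import Mathlib

/-- Number-theoretic step: if `p • u = q • v` with `p > 0`, `q ≥ 0`, and `v` primitive,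
then `u` is a non-negative integer multiple of `v`. -/
lemma stmt_14_nt {n : ℕ} (v u : Fin n → ℤ)
    (hprim : Finset.univ.gcd (fun i => (v i).natAbs) = 1)
    (p q : ℤ) (hp : 0 < p) (hq : 0 ≤ q) (h : ∀ i, p * u i = q * v i) :
    ∃ k : ℕ, u = fun i => (k : ℤ) * v i := by
  set d : ℕ := Int.gcd p q with hd
  have hdpos : 0 < d := Int.gcd_pos_iff.mpr (Or.inl hp.ne')
  set p' : ℤ := p / d with hp'
  set q' : ℤ := q / d with hq'
  have hpd : (d : ℤ) * p' = p := Int.mul_ediv_cancel' (Int.gcd_dvd_left p q)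
  have hqd : (d : ℤ) * q' = q := Int.mul_ediv_cancel' (Int.gcd_dvd_right p q)
  have cop : Int.gcd p' q' = 1 := Int.gcd_div_gcd_div_gcd hdpos
  have heq' : ∀ i, p' * u i = q' * v i := by
    intro i
    have h0 : (d : ℤ) ≠ 0 := by exact_mod_cast hdpos.ne'
    have := h i
    rw [← hpd, ← hqd] at this
    have : (d:ℤ) * (p' * u i) = (d:ℤ) * (q' * v i) := by ring_nf; ring_nf at this; linarith
    exact mul_left_cancel₀ h0 this
  have hdvd : ∀ i, p' ∣ v i := fun i =>
    Int.dvd_of_dvd_mul_right_of_gcd_one ⟨u i, (heq' i).symm⟩ cop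
  have hnat : p'.natAbs = 1 := by
    have : p'.natAbs ∣ Finset.univ.gcd (fun i => (v i).natAbs) :=
      Finset.dvd_gcd fun i _ => Int.natAbs_dvd_natAbs.mpr (hdvd i)
    rw [hprim] at this
    exact Nat.dvd_one.mp this
  have hp'pos : 0 < p' := by
    rcases lt_trichotomy p' 0 with hlt | he | hgt
    · nlinarith [hpd, (by exact_mod_cast hdpos : (0:ℤ) < (d:ℤ))]
    · rw [he] at hpd; simp at hpd; omega
    · exact hgt
  have hp'1 : p' = 1 := by omega
  have hq'nonneg : 0 ≤ q' := by
    nlinarith [hqd, (by exact_mod_cast hdpos : (0:ℤ) < (d:ℤ))]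
  refine ⟨q'.toNat, funext fun i => ?_⟩
  have := heq' i
  rw [hp'1, one_mul] at this
  rw [this, Int.toNat_of_nonneg hq'nonneg]

/-- Analytic step: a monomial functional separating `u` from the cone on `v`
contradicts membership of the tentacle. -/
lemma stmt_14_aux {n : ℕ} (U : Set (Fin n → ℝ)) (hUne : U.Nonempty)
    (hUbd : Bornology.IsBounded U)
    (hUpos : closure U ⊆ {ξ | ∀ i, 0 < ξ i})
    (u v α : Fin n → ℤ) (hA : 0 < ∑ i, α i * u i) (hB : ∑ i, α i * v i ≤ 0)
    (ξ : Fin n → ℝ) (hξne : ∀ i, ξ i ≠ 0) (ε : ℝ) (hε : 0 < ε)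
    (hmem : ∀ s : ℝ, 0 < s → s < ε →
      ∃ η ∈ U, ∃ t : ℝ, 0 < t ∧ t ≤ 1 ∧ ∀ i, s ^ u i * ξ i = t ^ v i * η i) :
    False := by
  have hK : IsCompact (closure U) := hUbd.isCompact_closure
  set G : (Fin n → ℝ) → ℝ := fun x => ∑ i, (α i : ℝ) * Real.log (x i) with hG
  have hGcont : ContinuousOn G (closure U) := by
    apply continuousOn_finset_sum
    intro i _
    apply continuousOn_const.mul
    intro x hx
    have hc : ContinuousAt (fun y : Fin n → ℝ => Real.log (y i)) x :=
      ContinuousAt.comp (g := Real.log) (f := fun y : Fin n → ℝ => y i) (x := x)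
        (Real.continuousAt_log (ne_of_gt (hUpos hx i))) ((continuous_apply i).continuousAt)
    exact hc.continuousWithinAt
  obtain ⟨x₀, hx₀, hmin⟩ := hK.exists_isMinOn hUne.closure hGcont
  set m : ℝ := G x₀ with hm
  set A : ℝ := ∑ i, (α i : ℝ) * (u i : ℝ) with hAdef
  have hA' : 0 < A := by
    rw [hAdef]
    exact_mod_cast hA
  have key : ∀ s : ℝ, 0 < s → s < ε → m ≤ A * Real.log s + G ξ := by
    intro s hs hs'
    obtain ⟨η, hη, t, ht0, ht1, heq⟩ := hmem s hs hs'
    have hηpos : ∀ i, 0 < η i := hUpos (subset_closure hη)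
    have hlog : ∀ i, (u i : ℝ) * Real.log s + Real.log (ξ i)
        = (v i : ℝ) * Real.log t + Real.log (η i) := by
      intro i
      have := congrArg Real.log (heq i)
      rwa [Real.log_mul (zpow_ne_zero _ hs.ne') (hξne i),
        Real.log_mul (zpow_ne_zero _ ht0.ne') (hηpos i).ne',
        Real.log_zpow, Real.log_zpow] at this
    have hsum : ∑ i, (α i : ℝ) * ((u i : ℝ) * Real.log s + Real.log (ξ i))
        = ∑ i, (α i : ℝ) * ((v i : ℝ) * Real.log t + Real.log (η i)) :=
      Finset.sum_congr rfl fun i _ => by rw [hlog i]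
    set B : ℝ := ∑ i, (α i : ℝ) * (v i : ℝ) with hBdef
    have hB' : B ≤ 0 := by
      rw [hBdef]; exact_mod_cast hB
    have key2 : A * Real.log s + G ξ = B * Real.log t + G η := by
      rw [hAdef, hBdef, hG, Finset.sum_mul, Finset.sum_mul,
        ← Finset.sum_add_distrib, ← Finset.sum_add_distrib]
      rw [show (∑ i, ((α i : ℝ) * (u i : ℝ) * Real.log s + (α i : ℝ) * Real.log (ξ i)))
          = ∑ i, (α i : ℝ) * ((u i : ℝ) * Real.log s + Real.log (ξ i)) from
        Finset.sum_congr rfl fun i _ => by ring]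
      rw [show (∑ i, ((α i : ℝ) * (v i : ℝ) * Real.log t + (α i : ℝ) * Real.log (η i)))
          = ∑ i, (α i : ℝ) * ((v i : ℝ) * Real.log t + Real.log (η i)) from
        Finset.sum_congr rfl fun i _ => by ring]
      exact hsum
    have hlt : Real.log t ≤ 0 := Real.log_nonpos ht0.le ht1
    have h1 : 0 ≤ B * Real.log t := by nlinarith
    have h2 : m ≤ G η := hmin (subset_closure hη)
    linarith
  -- now pick a very small s
  set c : ℝ := (m - G ξ - 1) / A with hc
  set s₀ : ℝ := min (ε / 2) (Real.exp c) with hs₀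
  have hs₀pos : 0 < s₀ := lt_min (half_pos hε) (Real.exp_pos c)
  have hs₀lt : s₀ < ε := lt_of_le_of_lt (min_le_left _ _) (half_lt_self hε)
  have hlogs : Real.log s₀ ≤ c := by
    calc Real.log s₀ ≤ Real.log (Real.exp c) :=
          Real.log_le_log hs₀pos (min_le_right _ _)
      _ = c := Real.log_exp c
  have h3 := key s₀ hs₀pos hs₀lt
  have h4 : A * Real.log s₀ ≤ A * c := mul_le_mul_of_nonneg_left hlogs hA'.le
  have h5 : A * c = m - G ξ - 1 := by
    rw [hc]; field_simp
  linarith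

/-- Lemma 2.17(a): for the `v`-tentacle `S = {λ_v(s)·ξ : ξ ∈ U, 0 < s ≤ 1}` over a
non-empty bounded `U` with closure contained in the open positive orthant, and `v` a
non-zero primitive lattice vector, `S(u)` is non-empty if and only if `u` is a
non-negative integer multiple of `v`. -/
theorem stmt_14 (n : ℕ) (U : Set (Fin n → ℝ)) (hUne : U.Nonempty)
    (hUbd : Bornology.IsBounded U)
    (hUpos : closure U ⊆ {ξ | ∀ i, 0 < ξ i})
    (v : Fin n → ℤ) (hv : v ≠ 0)
    (hprim : Finset.univ.gcd (fun i => (v i).natAbs) = 1)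
    (S : Set (Fin n → ℝ))
    (hS : S = {x | ∃ ξ ∈ U, ∃ s : ℝ, 0 < s ∧ s ≤ 1 ∧ x = fun i => s ^ v i * ξ i})
    (u : Fin n → ℤ) :
    ({ξ : Fin n → ℝ | (∀ i, ξ i ≠ 0) ∧
        ∃ ε > (0 : ℝ), ∀ s : ℝ, 0 < s → s < ε → (fun i => s ^ u i * ξ i) ∈ S}).Nonempty
      ↔ ∃ k : ℕ, u = fun i => (k : ℤ) * v i := by
  constructor
  · rintro ⟨ξ, hξne, ε, hε, hmem⟩
    have hmem' : ∀ s : ℝ, 0 < s → s < ε →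
        ∃ η ∈ U, ∃ t : ℝ, 0 < t ∧ t ≤ 1 ∧ ∀ i, s ^ u i * ξ i = t ^ v i * η i := by
      intro s hs hs'
      have := hmem s hs hs'
      rw [hS] at this
      obtain ⟨η, hη, t, ht0, ht1, hfn⟩ := this
      exact ⟨η, hη, t, ht0, ht1, fun i => congrFun hfn i⟩
    obtain ⟨i₀, hi₀⟩ := Function.ne_iff.mp hv
    set p : ℤ := ∑ i, v i * v i with hpdef
    set q : ℤ := ∑ i, u i * v i with hqdef
    have hp : 0 < p := Finset.sum_pos' (fun i _ => mul_self_nonneg _)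
      ⟨i₀, Finset.mem_univ i₀, mul_self_pos.mpr hi₀⟩
    by_cases hcase : ∀ i, p * u i = q * v i
    · by_cases hq : 0 ≤ q
      · exact stmt_14_nt v u hprim p q hp hq hcase
      · exfalso
        apply stmt_14_aux U hUne hUbd hUpos u v (fun i => -v i) ?_ ?_ ξ hξne ε hε hmem'
        · have h1 : ∑ i, (-v i) * u i = -q := by
            rw [hqdef, ← Finset.sum_neg_distrib]
            exact Finset.sum_congr rfl fun i _ => by ring
          rw [h1]; linarith
        · have h2 : ∑ i, (-v i) * v i = -p := by
            rw [hpdef, ← Finset.sum_neg_distrib]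
            exact Finset.sum_congr rfl fun i _ => by ring
          rw [h2]; linarith
    · exfalso
      push_neg at hcase
      obtain ⟨i₁, hi₁⟩ := hcase
      set α : Fin n → ℤ := fun i => p * u i - q * v i with hα
      have hB0 : ∑ i, α i * v i = 0 := by
        have : ∑ i, α i * v i = p * q - q * p := by
          rw [hpdef, hqdef, Finset.mul_sum, Finset.mul_sum, ← Finset.sum_sub_distrib]
          exact Finset.sum_congr rfl fun i _ => by rw [hα]; ring
        rw [this]; ring
      have hA : 0 < ∑ i, α i * u i := by
        have h1 : ∑ i, α i * α i
            = p * ∑ i, α i * u i - q * ∑ i, α i * v i := by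
          rw [Finset.mul_sum, Finset.mul_sum, ← Finset.sum_sub_distrib]
          exact Finset.sum_congr rfl fun i _ => by rw [hα]; ring
        have h2 : 0 < ∑ i, α i * α i := Finset.sum_pos'
          (fun i _ => mul_self_nonneg _)
          ⟨i₁, Finset.mem_univ i₁, mul_self_pos.mpr (sub_ne_zero.mpr hi₁)⟩
        rw [h1, hB0, mul_zero, sub_zero] at h2
        nlinarith
      exact stmt_14_aux U hUne hUbd hUpos u v α hA (le_of_eq hB0) ξ hξne ε hε hmem'
  · rintro ⟨k, rfl⟩
    obtain ⟨ξ, hξU⟩ := hUne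
    have hξpos : ∀ i, 0 < ξ i := hUpos (subset_closure hξU)
    refine ⟨ξ, fun i => (hξpos i).ne', 1, one_pos, fun s hs hs1 => ?_⟩
    rw [hS]
    refine ⟨ξ, hξU, s ^ k, pow_pos hs k, pow_le_one₀ hs.le hs1.le, ?_⟩
    funext i
    rw [zpow_mul, zpow_natCast]
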